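/- If every proper χ(G)-vertex coloring of a graph G is complete, then every vertex of G has degree at least χ(G) − 1. -/
import Mathlib

open Finset

-- The vertex label induced by an edge coloring: `twinLabel G s v = Σ_{e ∈ E_v} s e` in `ZMod k`.
open scoped Classical in
noncomputable def twinLabel {V : Type*} [Fintype V] (G : SimpleGraph V) {k : ℕ}
    (s : Sym2 V → ZMod k) (v : V) : ZMod k :=
  ∑ e ∈ G.incidenceFinset v, s e

/-- `s` is an improper twin `k`-edge coloring of `G`: the induced vertex labeling
is a proper vertex coloring. -/
def IsImproperTwin {V : Type*} [Fintype V] (G : SimpleGraph V) (k : ℕ)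
    (s : Sym2 V → ZMod k) : Prop :=
  ∀ ⦃u v : V⦄, G.Adj u v → twinLabel G s u ≠ twinLabel G s v

/-- The improper twin chromatic index: the least `k ≥ 2` admitting an improper twin
`k`-edge coloring. -/
noncomputable def improperTwinIndex {V : Type*} [Fintype V] (G : SimpleGraph V) : ℕ :=
  sInf {k | 2 ≤ k ∧ ∃ s : Sym2 V → ZMod k, IsImproperTwin G k s}

theorem stmt_15 {V : Type*} [Fintype V] [DecidableEq V] (G : SimpleGraph V)
    [DecidableRel G.Adj]
    (n : ℕ) (hn : G.chromaticNumber = n)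
    (hcomp : ∀ C : G.Coloring (Fin n), ∀ i : Fin n, ∀ v : V,
      C v ≠ i → ∃ u : V, G.Adj v u ∧ C u = i) :
    ∀ v : V, n - 1 ≤ G.degree v := by
  intro v
  have hcol : G.Colorable n := by
    rw [← SimpleGraph.chromaticNumber_le_iff_colorable, hn]
  obtain ⟨C⟩ := hcol
  have hsub : Finset.univ.erase (C v) ⊆ (G.neighborFinset v).image C := by
    intro i hi
    obtain ⟨u, hadj, hcu⟩ := hcomp C i v (Ne.symm (Finset.ne_of_mem_erase hi))
    exact Finset.mem_image.2 ⟨u, by simpa using hadj, hcu⟩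
  calc n - 1 = (Finset.univ.erase (C v)).card := by
        simp [Finset.card_erase_of_mem]
    _ ≤ ((G.neighborFinset v).image C).card := Finset.card_le_card hsub
    _ ≤ (G.neighborFinset v).card := Finset.card_image_le
    _ = G.degree v := G.card_neighborFinset_eq_degree v
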